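/- Let C be an [n,k]_{q^m/q} code that is Hamming-minimal (every nonzero codeword c' whose Hamming support is contained in the Hamming support of a codeword c is an F_{q^m}-multiple of c). Then C is rank-minimal (the same property holds with rank supports in place of Hamming supports). -/
import Mathlib


open Module Submodule

/-- The rank support of a vector `v ∈ L^n` over the subfield `K`: the `K`-span of the
rows of the expansion matrix, i.e. the space of all `(φ (v 1), ..., φ (v n))` for
`K`-linear functionals `φ : L → K`. -/
noncomputable def rkSupport (K : Type) {L : Type} [Field K] [Field L] [Algebra K L]
    {n : ℕ} (v : Fin n → L) : Submodule K (Fin n → K) :=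
  LinearMap.range (LinearMap.pi (fun i => LinearMap.applyₗ (v i) :
    Fin n → Module.Dual K L →ₗ[K] K))


theorem stmt_17 {K L : Type} [Field K] [Field L] [Algebra K L] {n : ℕ}
    (C : Submodule L (Fin n → L))
    (hHmin : ∀ c ∈ C, ∀ c' ∈ C, c' ≠ 0 → {i | c' i ≠ 0} ⊆ {i | c i ≠ 0} →
      ∃ α : L, c' = α • c) :
    ∀ c ∈ C, ∀ c' ∈ C, c' ≠ 0 → rkSupport K c' ≤ rkSupport K c →
      ∃ α : L, c' = α • c := by
  intro c hc c' hc' hne hrk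
  apply hHmin c hc c' hc' hne
  intro i hi
  simp only [Set.mem_setOf_eq] at hi ⊢
  -- find a dual functional not vanishing on c' i
  have hex : ∃ φ : Module.Dual K L, φ (c' i) ≠ 0 := by
    by_contra h
    push_neg at h
    exact hi ((Module.forall_dual_apply_eq_zero_iff K (c' i)).mp h)
  obtain ⟨φ, hφ⟩ := hex
  have hmem : (fun j => φ (c' j)) ∈ rkSupport K c' := ⟨φ, rfl⟩
  obtain ⟨ψ, hψ⟩ := hrk hmem
  have : ψ (c i) = φ (c' i) := congrFun hψ i
  intro hci
  rw [hci, map_zero] at this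
  exact hφ this.symm
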